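/- Let H be a bounded self-adjoint operator on ℓ²(Γ;𝓗) that is locally ε-bulk-gapped at energy λ ∈ ℝ and scale L > 0. Then the open interval (λ − ε, λ + ε) is disjoint from the spectrum of H, i.e. σ(H) ∩ (λ − ε, λ + ε) = ∅. -/

import Mathlib

noncomputable section

open scoped ENNReal

/-- The squared ℓ²-mass of `ψ` in the region `A ⊆ ℝ^d`
(the ambient space `Fin d → ℝ` carries the sup norm). -/
def massSq {d : ℕ} (Γ : Set (Fin d → ℝ)) {𝓗 : Type*} [NormedAddCommGroup 𝓗]
    (ψ : lp (fun _ : Γ => 𝓗) 2) (A : Set (Fin d → ℝ)) : ℝ :=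
  ∑' x : Γ, A.indicator (fun _ => ‖ψ x‖ ^ 2) (x : Fin d → ℝ)

/-- The ℓ²-norm `‖ψ‖_A` of `ψ` in the region `A ⊆ ℝ^d`. -/
def normOn {d : ℕ} (Γ : Set (Fin d → ℝ)) {𝓗 : Type*} [NormedAddCommGroup 𝓗]
    (ψ : lp (fun _ : Γ => 𝓗) 2) (A : Set (Fin d → ℝ)) : ℝ :=
  Real.sqrt (massSq Γ ψ A)

/-- `H` is locally ε-bulk-gapped at energy `lam` and scale `L`: there are `N ≥ 2` and
`C < N⁻ᵈ` such that every `L`-local `ε`-quasimode at a point `x ∈ Γ` has its mass in the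
small closed cube `B̄_l(x)`, `l = (L+r)/N + r`, bounded by `C` times its mass in `B_L(x)`. -/
def IsLocallyBulkGapped {d : ℕ} (Γ : Set (Fin d → ℝ)) {𝓗 : Type*} [NormedAddCommGroup 𝓗]
    [InnerProductSpace ℂ 𝓗] [CompleteSpace 𝓗] (r : ℝ)
    (H : lp (fun _ : Γ => 𝓗) 2 →L[ℂ] lp (fun _ : Γ => 𝓗) 2) (lam ε L : ℝ) : Prop :=
  ∃ N : ℕ, 2 ≤ N ∧ ∃ C : ℝ, C < ((N : ℝ) ^ d)⁻¹ ∧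
    ∀ x ∈ Γ, ∀ ψ : lp (fun _ : Γ => 𝓗) 2,
      normOn Γ ((H - (lam : ℂ) • 1) ψ) (Metric.ball x L) ≤ ε * normOn Γ ψ (Metric.ball x L) →
      massSq Γ ψ (Metric.closedBall x ((L + r) / N + r)) ≤ C * massSq Γ ψ (Metric.ball x L)

namespace BulkGapAux


variable {d : ℕ} {Γ : Set (Fin d → ℝ)} {𝓗 : Type*} [NormedAddCommGroup 𝓗]

lemma rpow_two_eq (a : ℝ) : a ^ ((2:ℝ≥0∞).toReal) = a ^ 2 := by
  rw [show ((2:ℝ≥0∞).toReal) = ((2:ℕ):ℝ) by norm_num, Real.rpow_natCast]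

lemma summable_sq (ψ : lp (fun _ : Γ => 𝓗) 2) : Summable (fun x : Γ => ‖ψ x‖ ^ 2) := by
  simpa [rpow_two_eq] using (lp.memℓp ψ).summable (by norm_num : (0:ℝ) < (2:ℝ≥0∞).toReal)

lemma tsum_sq_eq (ψ : lp (fun _ : Γ => 𝓗) 2) : ∑' x : Γ, ‖ψ x‖ ^ 2 = ‖ψ‖ ^ 2 := by
  have h := lp.norm_rpow_eq_tsum (by norm_num : (0:ℝ) < (2:ℝ≥0∞).toReal) ψ
  simp only [rpow_two_eq] at h
  exact h.symm

def cutoff (A : Set (Fin d → ℝ)) (ψ : lp (fun _ : Γ => 𝓗) 2) : lp (fun _ : Γ => 𝓗) 2 :=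
  ⟨fun x => A.indicator (fun _ => ψ x) (x : Fin d → ℝ), by
    apply memℓp_gen
    apply Summable.of_nonneg_of_le (fun x => _) _
      ((lp.memℓp ψ).summable (by norm_num : (0:ℝ) < (2:ℝ≥0∞).toReal))
    · intro x
      positivity
    · intro x
      apply Real.rpow_le_rpow (norm_nonneg _) _ ENNReal.toReal_nonneg
      by_cases hx : (x : Fin d → ℝ) ∈ A <;> simp [Set.indicator_apply, hx]⟩

lemma cutoff_apply (A : Set (Fin d → ℝ)) (ψ : lp (fun _ : Γ => 𝓗) 2) (x : Γ) :
    (cutoff A ψ) x = A.indicator (fun _ => ψ x) (x : Fin d → ℝ) := rfl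

lemma norm_cutoff_apply_sq (A : Set (Fin d → ℝ)) (ψ : lp (fun _ : Γ => 𝓗) 2) (x : Γ) :
    ‖(cutoff A ψ) x‖ ^ 2 = A.indicator (fun _ => ‖ψ x‖ ^ 2) (x : Fin d → ℝ) := by
  rw [cutoff_apply]
  by_cases hx : (x : Fin d → ℝ) ∈ A <;> simp [Set.indicator_apply, hx]

lemma massSq_eq_sq_norm_cutoff (A : Set (Fin d → ℝ)) (ψ : lp (fun _ : Γ => 𝓗) 2) :
    massSq Γ ψ A = ‖cutoff A ψ‖ ^ 2 := by
  rw [massSq, ← tsum_sq_eq (cutoff A ψ)]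
  exact tsum_congr fun x => (norm_cutoff_apply_sq A ψ x).symm

lemma summable_indicator (ψ : lp (fun _ : Γ => 𝓗) 2) (A : Set (Fin d → ℝ)) :
    Summable (fun x : Γ => A.indicator (fun _ => ‖ψ x‖ ^ 2) (x : Fin d → ℝ)) := by
  have := summable_sq (cutoff A ψ)
  simpa only [norm_cutoff_apply_sq] using this

lemma massSq_nonneg (ψ : lp (fun _ : Γ => 𝓗) 2) (A : Set (Fin d → ℝ)) :
    0 ≤ massSq Γ ψ A := by
  rw [massSq_eq_sq_norm_cutoff]; positivity

lemma normOn_eq_norm_cutoff (A : Set (Fin d → ℝ)) (ψ : lp (fun _ : Γ => 𝓗) 2) :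
    normOn Γ ψ A = ‖cutoff A ψ‖ := by
  rw [normOn, massSq_eq_sq_norm_cutoff, Real.sqrt_sq (norm_nonneg _)]

lemma massSq_eq_normOn_sq (A : Set (Fin d → ℝ)) (ψ : lp (fun _ : Γ => 𝓗) 2) :
    massSq Γ ψ A = (normOn Γ ψ A) ^ 2 := by
  rw [normOn_eq_norm_cutoff, massSq_eq_sq_norm_cutoff]

lemma massSq_mono (ψ : lp (fun _ : Γ => 𝓗) 2) {A B : Set (Fin d → ℝ)} (h : A ⊆ B) :
    massSq Γ ψ A ≤ massSq Γ ψ B := by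
  apply Summable.tsum_le_tsum _ (summable_indicator ψ A) (summable_indicator ψ B)
  intro x
  classical
  rw [Set.indicator_apply, Set.indicator_apply]
  split_ifs with h1 h2 h2
  · exact le_rfl
  · exact absurd (h h1) h2
  · positivity
  · exact le_rfl

lemma sum_le_massSq (ψ : lp (fun _ : Γ => 𝓗) 2) {A : Set (Fin d → ℝ)} (F : Finset Γ)
    (h : ∀ p ∈ F, (p : Fin d → ℝ) ∈ A) :
    ∑ p ∈ F, ‖ψ p‖ ^ 2 ≤ massSq Γ ψ A := by
  have h1 : ∑ p ∈ F, ‖ψ p‖ ^ 2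
      = ∑ p ∈ F, A.indicator (fun _ => ‖ψ p‖ ^ 2) (p : Fin d → ℝ) := by
    apply Finset.sum_congr rfl
    intro p hp
    simp [Set.indicator_apply, h p hp]
  rw [h1]
  exact Summable.sum_le_tsum F (fun p _ => by
      by_cases hx : (p : Fin d → ℝ) ∈ A <;> simp [Set.indicator_apply, hx] <;> positivity)
    (summable_indicator ψ A)

lemma cutoff_add (A : Set (Fin d → ℝ)) (φ χ : lp (fun _ : Γ => 𝓗) 2) :
    cutoff A (φ + χ) = cutoff A φ + cutoff A χ := by
  apply lp.ext
  rw [lp.coeFn_add]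
  funext x
  show A.indicator (fun _ => (φ + χ) x) (x : Fin d → ℝ) = (cutoff A φ) x + (cutoff A χ) x
  by_cases hx : (x : Fin d → ℝ) ∈ A <;>
    simp [cutoff_apply, Set.indicator_apply, hx, lp.coeFn_add, Pi.add_apply]

lemma cutoff_smul (A : Set (Fin d → ℝ)) [NormedSpace ℂ 𝓗] (c : ℂ) (φ : lp (fun _ : Γ => 𝓗) 2) :
    cutoff A (c • φ) = c • cutoff A φ := by
  apply lp.ext
  rw [lp.coeFn_smul]
  funext x
  show A.indicator (fun _ => (c • φ) x) (x : Fin d → ℝ) = c • (cutoff A φ) x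
  by_cases hx : (x : Fin d → ℝ) ∈ A <;>
    simp [cutoff_apply, Set.indicator_apply, hx, lp.coeFn_smul, Pi.smul_apply]



lemma count_lattice {d N : ℕ} {s : ℝ} (hs : 0 < s) (p : Fin d → ℝ)
    (Q : Finset (Fin d → ℝ)) (hlat : ∀ q ∈ Q, ∀ i, ∃ k : ℤ, q i = 2 * s * k)
    (hnear : ∀ q ∈ Q, ∀ i, |p i - q i| < N * s) : Q.card ≤ N ^ d := by
  classical
  set t : Fin d → ℝ := fun i => (p i - N * s) / (2 * s) with ht
  have h2s : (0:ℝ) < 2 * s := by linarith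
  have key : ∀ q ∈ Q, ∀ i, ∃ k : ℤ, q i = 2 * s * k ∧ ⌊t i⌋ + 1 ≤ k ∧ k ≤ ⌊t i⌋ + N := by
    intro q hq i
    obtain ⟨k, hk⟩ := hlat q hq i
    have hnr := hnear q hq i
    rw [hk] at hnr
    obtain ⟨hn1, hn2⟩ := abs_lt.mp hnr
    refine ⟨k, hk, ?_, ?_⟩
    · have h1 : t i < (k : ℝ) := by
        rw [ht]
        simp only []
        rw [div_lt_iff₀ h2s]
        nlinarith
      have := Int.floor_lt.mpr h1
      omega
    · have h2 : ((k - N : ℤ) : ℝ) ≤ t i := by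
        push_cast
        rw [ht]
        simp only []
        rw [le_div_iff₀ h2s]
        nlinarith
      have := Int.le_floor.mpr h2
      omega
  have hcard : Q.card ≤
      (Fintype.piFinset (fun i : Fin d => Finset.Icc (⌊t i⌋ + 1) (⌊t i⌋ + N))).card := by
    apply Finset.card_le_card_of_injOn (fun q i => ⌊q i / (2 * s)⌋)
    · intro q hq
      simp only [Finset.mem_coe, Fintype.mem_piFinset]
      intro i
      obtain ⟨k, hk, hk1, hk2⟩ := key q hq i
      have he : q i / (2 * s) = (k : ℝ) := by rw [hk]; field_simp
      rw [he, Int.floor_intCast]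
      exact Finset.mem_Icc.mpr ⟨hk1, hk2⟩
    · intro q hq q' hq' hqq'
      funext i
      obtain ⟨k, hk, _, _⟩ := key q (Finset.mem_coe.mp hq) i
      obtain ⟨k', hk', _, _⟩ := key q' (Finset.mem_coe.mp hq') i
      have e1 : q i / (2 * s) = (k : ℝ) := by rw [hk]; field_simp
      have e2 : q' i / (2 * s) = (k' : ℝ) := by rw [hk']; field_simp
      have hfe : ⌊q i / (2 * s)⌋ = ⌊q' i / (2 * s)⌋ := congrFun hqq' i
      rw [e1, e2, Int.floor_intCast, Int.floor_intCast] at hfe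
      rw [hk, hk', hfe]
  refine hcard.trans ?_
  rw [Fintype.card_piFinset]
  have hIcc : ∀ i : Fin d, (Finset.Icc (⌊t i⌋ + 1) (⌊t i⌋ + N)).card = N := by
    intro i; rw [Int.card_Icc]; omega
  simp [hIcc]

lemma count_sep {d : ℕ} {L : ℝ} (hL : 0 < L) (p : Fin d → ℝ)
    (Q : Finset (Fin d → ℝ)) (hsep : (Q : Set (Fin d → ℝ)).Pairwise (fun a b => L ≤ dist a b))
    (hnear : ∀ q ∈ Q, dist p q < L) : Q.card ≤ 4 ^ d := by
  classical
  have hL2 : (0:ℝ) < L / 2 := by linarith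
  have hco : ∀ q ∈ Q, ∀ i, |q i - p i| < L := by
    intro q hq i
    have h1 : dist (p i) (q i) ≤ dist p q := dist_le_pi_dist p q i
    have h2 := hnear q hq
    rw [Real.dist_eq] at h1
    rw [abs_sub_comm]
    linarith
  have hcard : Q.card ≤ (Fintype.piFinset (fun _ : Fin d => Finset.Icc (0:ℤ) 3)).card := by
    apply Finset.card_le_card_of_injOn (fun q i => ⌊(q i - p i + L) / (L / 2)⌋)
    · intro q hq
      simp only [Finset.mem_coe, Fintype.mem_piFinset]
      intro i
      obtain ⟨hl, hu⟩ := abs_lt.mp (hco q hq i)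
      refine Finset.mem_Icc.mpr ⟨?_, ?_⟩
      · apply Int.le_floor.mpr
        push_cast
        apply div_nonneg _ (le_of_lt hL2)
        linarith
      · have h4 : (q i - p i + L) / (L / 2) < 4 := by rw [div_lt_iff₀ hL2]; linarith
        have := Int.floor_lt.mpr (show (q i - p i + L) / (L / 2) < ((4:ℤ):ℝ) by push_cast; exact h4)
        omega
    · intro q hq q' hq' hqq'
      by_contra hne
      have hsep' := hsep hq hq' hne
      have hlt : dist q q' < L := by
        rw [dist_pi_lt_iff hL]
        intro i
        set a := (q i - p i + L) / (L / 2) with ha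
        set b := (q' i - p i + L) / (L / 2) with hb
        have hfl : ⌊a⌋ = ⌊b⌋ := congrFun hqq' i
        have h1 : (⌊a⌋ : ℝ) ≤ a := Int.floor_le a
        have h2 : a < ⌊a⌋ + 1 := Int.lt_floor_add_one a
        have h3 : (⌊b⌋ : ℝ) ≤ b := Int.floor_le b
        have h4 : b < ⌊b⌋ + 1 := Int.lt_floor_add_one b
        rw [hfl] at h1 h2
        have hab : |a - b| < 1 := by rw [abs_lt]; constructor <;> linarith
        have hd : a - b = (q i - q' i) / (L / 2) := by
          rw [ha, hb]; ring
        have habs : |q i - q' i| < L / 2 := by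
          have h5 : |(q i - q' i) / (L / 2)| < 1 := by rw [← hd]; exact hab
          rw [abs_div, abs_of_pos hL2, div_lt_one hL2] at h5
          exact h5
        rw [Real.dist_eq]
        linarith
      linarith
  refine hcard.trans ?_
  rw [Fintype.card_piFinset]
  simp [Int.card_Icc]


section
variable {E : Type*} [NormedAddCommGroup E] [InnerProductSpace ℂ E] [CompleteSpace E]

lemma not_mem_spectrum_of_bddBelow (T : E →L[ℂ] E) (hT : IsSelfAdjoint T) (μ : ℝ)
    {δ : ℝ} (hδ : 0 < δ) (hb : ∀ φ : E, δ * ‖φ‖ ≤ ‖(T - (μ:ℂ) • 1) φ‖) :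
    (μ : ℂ) ∉ spectrum ℂ T := by
  set S : E →L[ℂ] E := T - (μ:ℂ) • 1 with hS
  have hSsym : (S : E →ₗ[ℂ] E).IsSymmetric := by
    have hTsym := ContinuousLinearMap.isSelfAdjoint_iff_isSymmetric.mp hT
    intro x y
    have h := hTsym x y
    simp only [ContinuousLinearMap.coe_coe] at h
    simp only [hS, ContinuousLinearMap.coe_coe, ContinuousLinearMap.sub_apply,
      ContinuousLinearMap.smul_apply, ContinuousLinearMap.one_apply,
      inner_sub_left, inner_sub_right, inner_smul_left, inner_smul_right, h,
      Complex.conj_ofReal]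
  have hbound : ∀ x : E, ‖x‖ ≤ (δ⁻¹.toNNReal : ℝ) * ‖S x‖ := by
    intro x
    have h3 := mul_le_mul_of_nonneg_left (hb x) (inv_pos.mpr hδ).le
    rw [← mul_assoc, inv_mul_cancel₀ (ne_of_gt hδ), one_mul] at h3
    rw [Real.coe_toNNReal _ (inv_pos.mpr hδ).le]
    exact h3
  have hanti : AntilipschitzWith δ⁻¹.toNNReal S := S.antilipschitz_of_bound hbound
  have hclosed : IsClosed (Set.range S) := hanti.isClosed_range S.uniformContinuous
  have hinj : Function.Injective S := by
    intro x y hxy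
    have h4 : S (x - y) = 0 := by rw [map_sub, hxy, sub_self]
    have h5 := hb (x - y)
    rw [show (T - (μ:ℂ) • 1) (x - y) = S (x - y) from rfl, h4, norm_zero] at h5
    have h6 : ‖x - y‖ ≤ 0 := by nlinarith [norm_nonneg (x - y)]
    have h7 : x - y = 0 := norm_le_zero_iff.mp h6
    exact sub_eq_zero.mp h7
  have hrange_closed : IsClosed ((LinearMap.range (S : E →ₗ[ℂ] E) : Submodule ℂ E) : Set E) := by
    have h8 : ((LinearMap.range (S : E →ₗ[ℂ] E) : Submodule ℂ E) : Set E) = Set.range S := by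
      ext y; simp [LinearMap.mem_range]
    rw [h8]; exact hclosed
  haveI : CompleteSpace (LinearMap.range (S : E →ₗ[ℂ] E) : Submodule ℂ E) := hrange_closed.completeSpace_coe
  have horto : (LinearMap.range (S : E →ₗ[ℂ] E) : Submodule ℂ E)ᗮ = ⊥ := by
    rw [Submodule.eq_bot_iff]
    intro v hv
    have h1 : ∀ x : E, inner ℂ (S x) v = (0:ℂ) := fun x =>
      (Submodule.mem_orthogonal _ v).mp hv (S x) (LinearMap.mem_range.mpr ⟨x, rfl⟩)
    have h4 : ∀ x : E, inner ℂ x (S v) = (0:ℂ) := by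
      intro x
      have h5 := hSsym x v
      simp only [ContinuousLinearMap.coe_coe] at h5
      rw [← h5]; exact h1 x
    have h2 : S v = 0 := inner_self_eq_zero.mp (h4 (S v))
    have h5 := hb v
    rw [show (T - (μ:ℂ) • 1) v = S v from rfl, h2, norm_zero] at h5
    have h6 : ‖v‖ ≤ 0 := by nlinarith [norm_nonneg v]
    exact norm_le_zero_iff.mp h6
  have hrange : LinearMap.range (S : E →ₗ[ℂ] E) = ⊤ := Submodule.orthogonal_eq_bot_iff.mp horto
  have hsurj : Function.Surjective S := LinearMap.range_eq_top.mp hrange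
  have hIsUnit : IsUnit S := ContinuousLinearMap.isUnit_iff_bijective.mpr ⟨hinj, hsurj⟩
  rw [spectrum.notMem_iff]
  have halg : (algebraMap ℂ (E →L[ℂ] E)) (μ:ℂ) - T = -S := by
    rw [Algebra.algebraMap_eq_smul_one, hS, neg_sub]
  rw [halg]
  exact hIsUnit.neg


end

section
variable {d : ℕ} {Γ : Set (Fin d → ℝ)} {𝓗 : Type*} [NormedAddCommGroup 𝓗]

lemma sum_massSq_ball_le (φ : lp (fun _ : Γ => 𝓗) 2) {ι : Type*} (Q : Finset ι)
    (c : ι → Fin d → ℝ) (L : ℝ) (K : ℕ)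
    (hcount : ∀ p : Fin d → ℝ, ∀ G : Finset ι, G ⊆ Q →
      (∀ q ∈ G, p ∈ Metric.ball (c q) L) → G.card ≤ K) :
    ∑ q ∈ Q, massSq Γ φ (Metric.ball (c q) L) ≤ (K : ℝ) * ‖φ‖ ^ 2 := by
  classical
  have hswap : ∑ q ∈ Q, massSq Γ φ (Metric.ball (c q) L)
      = ∑' x : Γ, ∑ q ∈ Q,
          (Metric.ball (c q) L).indicator (fun _ => ‖φ x‖ ^ 2) (x : Fin d → ℝ) := by
    rw [Summable.tsum_finsetSum (fun q _ => summable_indicator φ _)]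
    rfl
  rw [hswap]
  have hpt : ∀ x : Γ, ∑ q ∈ Q,
      (Metric.ball (c q) L).indicator (fun _ => ‖φ x‖ ^ 2) (x : Fin d → ℝ)
      ≤ (K : ℝ) * ‖φ x‖ ^ 2 := by
    intro x
    have h1 : ∑ q ∈ Q, (Metric.ball (c q) L).indicator (fun _ => ‖φ x‖ ^ 2) (x : Fin d → ℝ)
        = ∑ q ∈ Q.filter (fun q => (x : Fin d → ℝ) ∈ Metric.ball (c q) L), ‖φ x‖ ^ 2 := by
      rw [Finset.sum_filter]
      exact Finset.sum_congr rfl fun q _ => by simp [Set.indicator_apply]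
    rw [h1, Finset.sum_const, nsmul_eq_mul]
    apply mul_le_mul_of_nonneg_right _ (by positivity)
    have := hcount (x : Fin d → ℝ) (Q.filter (fun q => (x : Fin d → ℝ) ∈ Metric.ball (c q) L))
      (Finset.filter_subset _ _) (fun q hq => (Finset.mem_filter.mp hq).2)
    exact_mod_cast this
  have hnn : ∀ x : Γ, 0 ≤ ∑ q ∈ Q,
      (Metric.ball (c q) L).indicator (fun _ => ‖φ x‖ ^ 2) (x : Fin d → ℝ) :=
    fun x => Finset.sum_nonneg fun q _ => Set.indicator_nonneg (fun _ _ => by positivity) _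
  have hsummL : Summable (fun x : Γ => ∑ q ∈ Q,
      (Metric.ball (c q) L).indicator (fun _ => ‖φ x‖ ^ 2) (x : Fin d → ℝ)) :=
    Summable.of_nonneg_of_le hnn hpt ((summable_sq φ).mul_left _)
  calc ∑' x : Γ, ∑ q ∈ Q,
        (Metric.ball (c q) L).indicator (fun _ => ‖φ x‖ ^ 2) (x : Fin d → ℝ)
      ≤ ∑' x : Γ, (K : ℝ) * ‖φ x‖ ^ 2 :=
        Summable.tsum_le_tsum hpt hsummL ((summable_sq φ).mul_left _)
    _ = (K : ℝ) * ‖φ‖ ^ 2 := by rw [tsum_mul_left, tsum_sq_eq]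

lemma exists_maximal_separated (Γ' : Set (Fin d → ℝ)) {L : ℝ} (hL : 0 < L) :
    ∃ Y : Set (Fin d → ℝ), Y ⊆ Γ' ∧ Y.Pairwise (fun a b => L ≤ dist a b) ∧
      ∀ p ∈ Γ', ∃ y ∈ Y, dist p y < L := by
  set S : Set (Set (Fin d → ℝ)) := {Y | Y ⊆ Γ' ∧ Y.Pairwise (fun a b => L ≤ dist a b)} with hSdef
  have hchain : ∀ c ⊆ S, IsChain (· ⊆ ·) c → ∃ ub ∈ S, ∀ s ∈ c, s ⊆ ub := by
    intro c hcS hch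
    refine ⟨⋃₀ c, ⟨?_, ?_⟩, fun t ht => Set.subset_sUnion_of_mem ht⟩
    · exact Set.sUnion_subset fun t ht => (hcS ht).1
    · intro a ha b hb hab
      obtain ⟨A, hA, haA⟩ := ha
      obtain ⟨B, hB, hbB⟩ := hb
      rcases hch.total hA hB with h | h
      · exact (hcS hB).2 (h haA) hbB hab
      · exact (hcS hA).2 haA (h hbB) hab
  obtain ⟨Y, hY⟩ := zorn_subset S hchain
  refine ⟨Y, hY.1.1, hY.1.2, ?_⟩
  intro p hp
  by_contra hc
  push_neg at hc
  have hmem : insert p Y ∈ S := by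
    refine ⟨Set.insert_subset hp hY.1.1, ?_⟩
    rw [Set.pairwise_insert]
    exact ⟨hY.1.2, fun b hb _ => ⟨hc b hb, by rw [dist_comm]; exact hc b hb⟩⟩
  have hpY : p ∈ Y := hY.2 hmem (Set.subset_insert p Y) (Set.mem_insert p Y)
  have := hc p hpY
  simp only [dist_self] at this
  linarith

lemma caseB_bound (ψ w : lp (fun _ : Γ => 𝓗) 2) {L κ2 : ℝ} (hL : 0 < L) (hκ2 : 0 ≤ κ2)
    (hbd : ∀ x ∈ Γ, massSq Γ ψ (Metric.ball x L) ≤ κ2 * massSq Γ w (Metric.ball x L)) :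
    ‖ψ‖ ^ 2 ≤ κ2 * ((4:ℝ) ^ d * ‖w‖ ^ 2) := by
  classical
  obtain ⟨Y, hYΓ, hYsep, hYcov⟩ := exists_maximal_separated Γ hL
  have hch : ∀ p : Γ, ∃ y, y ∈ Y ∧ dist (p : Fin d → ℝ) y < L := by
    intro p
    obtain ⟨y, hy1, hy2⟩ := hYcov ↑p p.2
    exact ⟨y, hy1, hy2⟩
  choose σ hσY hσd using hch
  rw [← tsum_sq_eq ψ]
  apply Summable.tsum_le_of_sum_le (summable_sq ψ)
  intro F
  rw [← Finset.sum_fiberwise_of_maps_to (fun p hp => Finset.mem_image_of_mem σ hp)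
    (fun p => ‖ψ p‖ ^ 2)]
  have hstep : ∀ q ∈ F.image σ,
      ∑ p ∈ F.filter (fun p => σ p = q), ‖ψ p‖ ^ 2
        ≤ κ2 * massSq Γ w (Metric.ball q L) := by
    intro q hq
    obtain ⟨p0, hp0F, hp0⟩ := Finset.mem_image.mp hq
    have hqY : q ∈ Y := hp0 ▸ hσY p0
    have h1 : ∑ p ∈ F.filter (fun p => σ p = q), ‖ψ p‖ ^ 2
        ≤ massSq Γ ψ (Metric.ball q L) := by
      apply sum_le_massSq
      intro p hp
      have hpq : σ p = q := (Finset.mem_filter.mp hp).2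
      rw [Metric.mem_ball]
      exact hpq ▸ hσd p
    exact h1.trans (hbd q (hYΓ hqY))
  calc ∑ q ∈ F.image σ, ∑ p ∈ F.filter (fun p => σ p = q), ‖ψ p‖ ^ 2
      ≤ ∑ q ∈ F.image σ, κ2 * massSq Γ w (Metric.ball q L) := Finset.sum_le_sum hstep
    _ = κ2 * ∑ q ∈ F.image σ, massSq Γ w (Metric.ball q L) := by rw [Finset.mul_sum]
    _ ≤ κ2 * ((4:ℝ) ^ d * ‖w‖ ^ 2) := by
        apply mul_le_mul_of_nonneg_left _ hκ2
        have hcount : ∀ p : Fin d → ℝ, ∀ G : Finset (Fin d → ℝ), G ⊆ F.image σ →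
            (∀ q ∈ G, p ∈ Metric.ball (id q) L) → G.card ≤ 4 ^ d := by
          intro p G hGsub hGmem
          apply count_sep hL p
          · apply hYsep.mono
            intro z hz
            obtain ⟨p1, _, hp1⟩ := Finset.mem_image.mp (hGsub hz)
            exact hp1 ▸ hσY p1
          · intro q hq
            have := hGmem q hq
            simp only [Metric.mem_ball, id] at this
            exact this
        have h2 := sum_massSq_ball_le w (F.image σ) id L (4 ^ d) hcount
        simp only [id] at h2
        calc ∑ q ∈ F.image σ, massSq Γ w (Metric.ball q L)
            ≤ ((4 ^ d : ℕ) : ℝ) * ‖w‖ ^ 2 := h2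
          _ = (4:ℝ) ^ d * ‖w‖ ^ 2 := by push_cast; ring

lemma caseA_bound (ψ w : lp (fun _ : Γ => 𝓗) 2) {L r C' κ2 : ℝ} {N : ℕ}
    (hr : 0 < r) (hL : 0 < L) (hN : 2 ≤ N)
    (hC'0 : 0 ≤ C') (hκ2 : 0 ≤ κ2)
    (hnet : ∀ p : Fin d → ℝ, ∃ x ∈ Γ, ‖p - x‖ ≤ r)
    (hlt : (L + r) / N + r < L)
    (dich : ∀ x ∈ Γ,
      massSq Γ ψ (Metric.closedBall x ((L + r) / N + r)) ≤ C' * massSq Γ ψ (Metric.ball x L)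
      ∨ massSq Γ ψ (Metric.ball x L) ≤ κ2 * massSq Γ w (Metric.ball x L)) :
    ‖ψ‖ ^ 2 ≤ C' * ((N:ℝ) ^ d * ‖ψ‖ ^ 2) + κ2 * ((N:ℝ) ^ d * ‖w‖ ^ 2) := by
  classical
  have hNpos : (0:ℝ) < (N:ℝ) := by
    have : (2:ℝ) ≤ (N:ℝ) := by exact_mod_cast hN
    linarith
  set s : ℝ := (L + r) / N with hsdef
  have hs : 0 < s := by
    rw [hsdef]
    positivity
  have hNs : (N:ℝ) * s = L + r := by
    rw [hsdef]
    field_simp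
  have hch : ∀ q : Fin d → ℝ, ∃ x, x ∈ Γ ∧ dist q x ≤ r := by
    intro q
    obtain ⟨x, hx1, hx2⟩ := hnet q
    exact ⟨x, hx1, by rwa [dist_eq_norm]⟩
  choose ν hνΓ hνr using hch
  set ρ : Γ → (Fin d → ℝ) :=
    fun p => fun i => 2 * s * (round ((p : Fin d → ℝ) i / (2 * s)) : ℤ) with hρ
  have hρnear : ∀ p : Γ, dist (p : Fin d → ℝ) (ρ p) ≤ s := by
    intro p
    rw [dist_pi_le_iff hs.le]
    intro i
    rw [Real.dist_eq, hρ]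
    have h1 := abs_sub_round ((p : Fin d → ℝ) i / (2 * s))
    have h2s : (0:ℝ) < 2 * s := by linarith
    have h2 : (p : Fin d → ℝ) i - 2 * s * (round ((p : Fin d → ℝ) i / (2 * s)) : ℤ)
        = (2 * s) * ((p : Fin d → ℝ) i / (2 * s) - (round ((p : Fin d → ℝ) i / (2 * s)) : ℤ)) := by
      field_simp
    calc |(p : Fin d → ℝ) i - 2 * s * (round ((p : Fin d → ℝ) i / (2 * s)) : ℤ)|
        = (2 * s) * |(p : Fin d → ℝ) i / (2 * s) - (round ((p : Fin d → ℝ) i / (2 * s)) : ℤ)| := by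
          rw [h2, abs_mul, abs_of_pos h2s]
      _ ≤ (2 * s) * (1 / 2) := by
          apply mul_le_mul_of_nonneg_left h1 h2s.le
      _ = s := by ring
  rw [← tsum_sq_eq ψ]
  apply Summable.tsum_le_of_sum_le (summable_sq ψ)
  intro F
  rw [← Finset.sum_fiberwise_of_maps_to (fun p hp => Finset.mem_image_of_mem ρ hp)
    (fun p => ‖ψ p‖ ^ 2)]
  have hqlat : ∀ q ∈ F.image ρ, ∀ i, ∃ k : ℤ, q i = 2 * s * k := by
    intro q hq i
    obtain ⟨p, _, hp⟩ := Finset.mem_image.mp hq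
    exact ⟨round ((p : Fin d → ℝ) i / (2 * s)), by rw [← hp]⟩
  have hstep : ∀ q ∈ F.image ρ,
      ∑ p ∈ F.filter (fun p => ρ p = q), ‖ψ p‖ ^ 2
        ≤ C' * massSq Γ ψ (Metric.ball (ν q) L) + κ2 * massSq Γ w (Metric.ball (ν q) L) := by
    intro q hq
    have hfibdist : ∀ p ∈ F.filter (fun p => ρ p = q), dist (p : Fin d → ℝ) (ν q) ≤ s + r := by
      intro p hp
      have hpq : ρ p = q := (Finset.mem_filter.mp hp).2
      calc dist (p : Fin d → ℝ) (ν q) ≤ dist (p : Fin d → ℝ) q + dist q (ν q) := dist_triangle _ _ _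
        _ ≤ s + r := add_le_add (hpq ▸ hρnear p) (hνr q)
    have hfibcb : ∑ p ∈ F.filter (fun p => ρ p = q), ‖ψ p‖ ^ 2
        ≤ massSq Γ ψ (Metric.closedBall (ν q) (s + r)) := by
      apply sum_le_massSq
      intro p hp
      rw [Metric.mem_closedBall]
      exact hfibdist p hp
    have hfibb : ∑ p ∈ F.filter (fun p => ρ p = q), ‖ψ p‖ ^ 2
        ≤ massSq Γ ψ (Metric.ball (ν q) L) := by
      apply sum_le_massSq
      intro p hp
      rw [Metric.mem_ball]
      exact lt_of_le_of_lt (hfibdist p hp) hlt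
    rcases dich (ν q) (hνΓ q) with h | h
    · calc ∑ p ∈ F.filter (fun p => ρ p = q), ‖ψ p‖ ^ 2
          ≤ massSq Γ ψ (Metric.closedBall (ν q) (s + r)) := hfibcb
        _ ≤ C' * massSq Γ ψ (Metric.ball (ν q) L) := h
        _ ≤ C' * massSq Γ ψ (Metric.ball (ν q) L)
            + κ2 * massSq Γ w (Metric.ball (ν q) L) :=
            le_add_of_nonneg_right (mul_nonneg hκ2 (massSq_nonneg _ _))
    · calc ∑ p ∈ F.filter (fun p => ρ p = q), ‖ψ p‖ ^ 2
          ≤ massSq Γ ψ (Metric.ball (ν q) L) := hfibb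
        _ ≤ κ2 * massSq Γ w (Metric.ball (ν q) L) := h
        _ ≤ C' * massSq Γ ψ (Metric.ball (ν q) L)
            + κ2 * massSq Γ w (Metric.ball (ν q) L) :=
            le_add_of_nonneg_left (mul_nonneg hC'0 (massSq_nonneg _ _))
  have hcount : ∀ (φ : lp (fun _ : Γ => 𝓗) 2),
      ∑ q ∈ F.image ρ, massSq Γ φ (Metric.ball (ν q) L) ≤ (N:ℝ) ^ d * ‖φ‖ ^ 2 := by
    intro φ
    have hcnt : ∀ p : Fin d → ℝ, ∀ G : Finset (Fin d → ℝ), G ⊆ F.image ρ →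
        (∀ q ∈ G, p ∈ Metric.ball (ν q) L) → G.card ≤ N ^ d := by
      intro p G hGsub hGmem
      apply count_lattice hs p
      · intro q hq
        exact hqlat q (hGsub hq)
      · intro q hq i
        have hball := hGmem q hq
        rw [Metric.mem_ball] at hball
        have h1 : dist (p i) ((ν q) i) ≤ dist p (ν q) := dist_le_pi_dist p (ν q) i
        have h2 : dist ((ν q) i) (q i) ≤ dist (ν q) q := dist_le_pi_dist (ν q) q i
        have h3 : dist (ν q) q ≤ r := by rw [dist_comm]; exact hνr q
        have h4 : |p i - q i| ≤ dist (p i) ((ν q) i) + dist ((ν q) i) (q i) := by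
          rw [Real.dist_eq, Real.dist_eq]
          calc |p i - q i| = |(p i - (ν q) i) + ((ν q) i - q i)| := by ring_nf
            _ ≤ |p i - (ν q) i| + |(ν q) i - q i| := abs_add_le _ _
        calc |p i - q i| ≤ dist (p i) ((ν q) i) + dist ((ν q) i) (q i) := h4
          _ ≤ dist p (ν q) + r := add_le_add h1 (h2.trans h3)
          _ < L + r := by linarith
          _ = (N:ℝ) * s := hNs.symm
    have h5 := sum_massSq_ball_le φ (F.image ρ) ν L (N ^ d) hcnt
    calc ∑ q ∈ F.image ρ, massSq Γ φ (Metric.ball (ν q) L)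
        ≤ ((N ^ d : ℕ) : ℝ) * ‖φ‖ ^ 2 := h5
      _ = (N:ℝ) ^ d * ‖φ‖ ^ 2 := by push_cast; ring
  calc ∑ q ∈ F.image ρ, ∑ p ∈ F.filter (fun p => ρ p = q), ‖ψ p‖ ^ 2
      ≤ ∑ q ∈ F.image ρ, (C' * massSq Γ ψ (Metric.ball (ν q) L)
          + κ2 * massSq Γ w (Metric.ball (ν q) L)) := Finset.sum_le_sum hstep
    _ = C' * ∑ q ∈ F.image ρ, massSq Γ ψ (Metric.ball (ν q) L)
        + κ2 * ∑ q ∈ F.image ρ, massSq Γ w (Metric.ball (ν q) L) := by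
          rw [Finset.sum_add_distrib, Finset.mul_sum, Finset.mul_sum]
    _ ≤ C' * ((N:ℝ) ^ d * ‖ψ‖ ^ 2) + κ2 * ((N:ℝ) ^ d * ‖w‖ ^ 2) :=
          add_le_add (mul_le_mul_of_nonneg_left (hcount ψ) hC'0)
            (mul_le_mul_of_nonneg_left (hcount w) hκ2)
    _ = C' * ((N:ℝ) ^ d * ∑' x : Γ, ‖ψ x‖ ^ 2) + κ2 * ((N:ℝ) ^ d * ‖w‖ ^ 2) := by
          rw [tsum_sq_eq ψ]


end
end BulkGapAux

set_option maxHeartbeats 2000000 in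
open BulkGapAux in
/-- **Theorem (main).** If a bounded self-adjoint Hamiltonian `H` on `ℓ²(Γ;𝓗)` is locally
ε-bulk-gapped at energy `lam` and some scale `L > 0`, then `(lam - ε, lam + ε)` is a gap in
the spectrum of `H`. -/
theorem spectral_gap_of_locally_bulk_gapped
    {d : ℕ} (hd : 1 ≤ d) {r : ℝ} (hr : 0 < r)
    (Γ : Set (Fin d → ℝ)) (hΓcount : Γ.Countable)
    (hnet : ∀ p : Fin d → ℝ, ∃ x ∈ Γ, ‖p - x‖ ≤ r)
    {𝓗 : Type*} [NormedAddCommGroup 𝓗] [InnerProductSpace ℂ 𝓗] [CompleteSpace 𝓗]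
    [TopologicalSpace.SeparableSpace 𝓗]
    (H : lp (fun _ : Γ => 𝓗) 2 →L[ℂ] lp (fun _ : Γ => 𝓗) 2)
    (hH : IsSelfAdjoint H)
    (lam ε L : ℝ) (hε : 0 < ε) (hL : 0 < L)
    (hgap : IsLocallyBulkGapped Γ r H lam ε L) :
    ∀ μ : ℝ, μ ∈ Set.Ioo (lam - ε) (lam + ε) → (μ : ℂ) ∉ spectrum ℂ H := by
  intro μ hμ
  obtain ⟨N, hN2, C, hC, hyp⟩ := hgap
  have hN2R : (2:ℝ) ≤ (N:ℝ) := by exact_mod_cast hN2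
  have hNpos : (0:ℝ) < (N:ℝ) := by linarith
  have hNd1 : (1:ℝ) ≤ (N:ℝ) ^ d := one_le_pow₀ (by linarith)
  set C' : ℝ := max C 0 with hC'def
  have hC'0 : (0:ℝ) ≤ C' := le_max_right _ _
  have hC' : C' < ((N:ℝ) ^ d)⁻¹ := max_lt hC (by positivity)
  have hCN : C' * (N:ℝ) ^ d < 1 := by
    have h1 := mul_lt_mul_of_pos_right hC' (show (0:ℝ) < (N:ℝ) ^ d by positivity)
    rwa [inv_mul_cancel₀ (by positivity : ((N:ℝ) ^ d) ≠ 0)] at h1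
  set m : ℝ := |μ - lam| with hmdef
  have hm : m < ε := by
    rw [hmdef]
    rw [abs_lt]
    constructor <;> [linarith [hμ.1]; linarith [hμ.2]]
  have hεm : 0 < ε - m := by linarith
  set θ : ℝ := 1 - C' * (N:ℝ) ^ d with hθdef
  have hθpos : 0 < θ := by rw [hθdef]; linarith
  have hθle1 : θ ≤ 1 := by
    rw [hθdef]
    nlinarith [hC'0, (show (0:ℝ) ≤ (N:ℝ) ^ d by positivity)]
  set M : ℝ := ((N:ℝ) + 4) ^ d with hMdef
  have hMpos : 0 < M := by rw [hMdef]; positivity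
  have hpow : ∀ a : ℝ, 0 ≤ a → a ≤ ((N:ℝ) + 4) ^ 2 → a ^ d ≤ M ^ 2 := by
    intro a ha hle
    calc a ^ d ≤ (((N:ℝ) + 4) ^ 2) ^ d := pow_le_pow_left₀ ha hle d
      _ = M ^ 2 := by rw [hMdef, ← pow_mul, ← pow_mul, Nat.mul_comm]
  have hNdM : (N:ℝ) ^ d ≤ M ^ 2 := hpow (N:ℝ) hNpos.le (by nlinarith)
  have h4M : (4:ℝ) ^ d ≤ M ^ 2 := hpow 4 (by norm_num) (by nlinarith)
  set κ2 : ℝ := ((ε - m)⁻¹) ^ 2 with hκ2def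
  have hκ2pos : 0 < κ2 := by rw [hκ2def]; exact pow_pos (inv_pos.mpr hεm) 2
  set δ : ℝ := (ε - m) * Real.sqrt θ / M with hδdef
  have hδ : 0 < δ := by
    rw [hδdef]
    exact div_pos (mul_pos hεm (Real.sqrt_pos.mpr hθpos)) hMpos
  have hkd : κ2 * δ ^ 2 = θ / M ^ 2 := by
    rw [hδdef, hκ2def, div_pow, mul_pow, Real.sq_sqrt hθpos.le]
    field_simp
  have hkdM : κ2 * δ ^ 2 * M ^ 2 = θ := by
    rw [hkd]
    field_simp
  have hκδ : (0:ℝ) ≤ κ2 * δ ^ 2 := by positivity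
  -- Main step: `H - μ` is bounded below by `δ`.
  have hbdd : ∀ φ : lp (fun _ : Γ => 𝓗) 2, δ * ‖φ‖ ≤ ‖(H - ((μ:ℝ):ℂ) • 1) φ‖ := by
    intro φ
    by_contra hcon
    push_neg at hcon
    set w : lp (fun _ : Γ => 𝓗) 2 := (H - ((μ:ℝ):ℂ) • 1) φ with hwdef
    have hφpos : 0 < ‖φ‖ := by
      by_contra h0
      push_neg at h0
      have h1 : 0 < δ * ‖φ‖ := lt_of_le_of_lt (norm_nonneg w) hcon
      nlinarith
    -- the dichotomy: every point is either "good" (bulk estimate) or "bad" (w is large there)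
    have dich : ∀ x ∈ Γ,
        massSq Γ φ (Metric.closedBall x ((L + r) / N + r)) ≤ C' * massSq Γ φ (Metric.ball x L)
        ∨ massSq Γ φ (Metric.ball x L) ≤ κ2 * massSq Γ w (Metric.ball x L) := by
      intro x hx
      by_cases hqm : normOn Γ ((H - (lam : ℂ) • 1) φ) (Metric.ball x L)
          ≤ ε * normOn Γ φ (Metric.ball x L)
      · left
        exact (hyp x hx φ hqm).trans
          (mul_le_mul_of_nonneg_right (le_max_left C 0) (massSq_nonneg _ _))
      · right
        push_neg at hqm
        have hg : (H - (lam : ℂ) • 1) φ = w + (((μ:ℝ):ℂ) - ((lam:ℝ):ℂ)) • φ := by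
          rw [hwdef]
          simp only [ContinuousLinearMap.sub_apply, ContinuousLinearMap.smul_apply,
            ContinuousLinearMap.one_apply, sub_smul]
          abel
        have hnorm_c : ‖(((μ:ℝ):ℂ) - ((lam:ℝ):ℂ))‖ = m := by
          rw [← Complex.ofReal_sub, Complex.norm_real, Real.norm_eq_abs, hmdef]
        have htri : normOn Γ ((H - (lam : ℂ) • 1) φ) (Metric.ball x L)
            ≤ normOn Γ w (Metric.ball x L) + m * normOn Γ φ (Metric.ball x L) := by
          rw [hg, normOn_eq_norm_cutoff, cutoff_add, cutoff_smul]
          refine (norm_add_le _ _).trans ?_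
          rw [norm_smul, hnorm_c, normOn_eq_norm_cutoff, normOn_eq_norm_cutoff]
        have hn : normOn Γ φ (Metric.ball x L)
            < (ε - m)⁻¹ * normOn Γ w (Metric.ball x L) := by
          have h2 : (ε - m) * normOn Γ φ (Metric.ball x L)
              < normOn Γ w (Metric.ball x L) := by linarith [hqm, htri]
          have h3 : normOn Γ φ (Metric.ball x L)
              < normOn Γ w (Metric.ball x L) / (ε - m) := (lt_div_iff₀ hεm).mpr (by linarith)
          rwa [div_eq_inv_mul] at h3
        rw [massSq_eq_normOn_sq, massSq_eq_normOn_sq]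
        have hnn : 0 ≤ normOn Γ φ (Metric.ball x L) := Real.sqrt_nonneg _
        calc normOn Γ φ (Metric.ball x L) ^ 2
            ≤ ((ε - m)⁻¹ * normOn Γ w (Metric.ball x L)) ^ 2 := by
              apply pow_le_pow_left₀ hnn hn.le
          _ = κ2 * normOn Γ w (Metric.ball x L) ^ 2 := by rw [hκ2def, mul_pow]
    have hw2 : ‖w‖ ^ 2 < δ ^ 2 * ‖φ‖ ^ 2 := by
      have h4 : ‖w‖ * ‖w‖ < (δ * ‖φ‖) * (δ * ‖φ‖) :=
        mul_lt_mul'' hcon hcon (norm_nonneg w) (norm_nonneg w)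
      nlinarith [h4]
    rcases lt_or_ge ((L + r) / N + r) L with hcase | hcase
    · -- large scale: lattice covering argument
      have hb := caseA_bound φ w hr hL hN2 hC'0 hκ2pos.le hnet hcase dich
      have hfin : ‖φ‖ ^ 2 < ‖φ‖ ^ 2 := by
        calc ‖φ‖ ^ 2
            ≤ C' * ((N:ℝ) ^ d * ‖φ‖ ^ 2) + κ2 * ((N:ℝ) ^ d * ‖w‖ ^ 2) := hb
          _ < C' * ((N:ℝ) ^ d * ‖φ‖ ^ 2) + κ2 * ((N:ℝ) ^ d * (δ ^ 2 * ‖φ‖ ^ 2)) := by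
              have hNdpos : (0:ℝ) < (N:ℝ) ^ d := by positivity
              exact add_lt_add_right (mul_lt_mul_of_pos_left
                (mul_lt_mul_of_pos_left hw2 hNdpos) hκ2pos) _
          _ ≤ ‖φ‖ ^ 2 := by
              have h6 : κ2 * δ ^ 2 * (N:ℝ) ^ d ≤ θ := by
                calc κ2 * δ ^ 2 * (N:ℝ) ^ d ≤ κ2 * δ ^ 2 * M ^ 2 :=
                      mul_le_mul_of_nonneg_left hNdM hκδ
                  _ = θ := hkdM
              have h7 : (κ2 * δ ^ 2 * (N:ℝ) ^ d) * ‖φ‖ ^ 2 ≤ θ * ‖φ‖ ^ 2 :=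
                mul_le_mul_of_nonneg_right h6 (sq_nonneg ‖φ‖)
              calc C' * ((N:ℝ) ^ d * ‖φ‖ ^ 2) + κ2 * ((N:ℝ) ^ d * (δ ^ 2 * ‖φ‖ ^ 2))
                  = (1 - θ) * ‖φ‖ ^ 2 + (κ2 * δ ^ 2 * (N:ℝ) ^ d) * ‖φ‖ ^ 2 := by
                    rw [hθdef]; ring
                _ ≤ (1 - θ) * ‖φ‖ ^ 2 + θ * ‖φ‖ ^ 2 := by linarith
                _ = ‖φ‖ ^ 2 := by ring
      exact lt_irrefl _ hfin
    · -- small scale: every point is "bad", separated-set covering argument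
      have hinv : ((N:ℝ) ^ d)⁻¹ ≤ 1 := by
        rw [inv_eq_one_div]
        exact (div_le_one (by positivity : (0:ℝ) < (N:ℝ) ^ d)).mpr hNd1
      have hC'1 : C' < 1 := hC'.trans_le hinv
      have hbd2 : ∀ x ∈ Γ,
          massSq Γ φ (Metric.ball x L) ≤ κ2 * massSq Γ w (Metric.ball x L) := by
        intro x hx
        rcases dich x hx with h | h
        · have hsub : Metric.ball x L ⊆ Metric.closedBall x ((L + r) / N + r) :=
            Metric.ball_subset_closedBall.trans (Metric.closedBall_subset_closedBall hcase)
          have h1 : massSq Γ φ (Metric.ball x L) ≤ C' * massSq Γ φ (Metric.ball x L) :=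
            (massSq_mono φ hsub).trans h
          have hmz : massSq Γ φ (Metric.ball x L) ≤ 0 := by
            nlinarith [massSq_nonneg φ (Metric.ball x L), h1, hC'1]
          exact hmz.trans (mul_nonneg hκ2pos.le (massSq_nonneg _ _))
        · exact h
      have hb := caseB_bound φ w hL hκ2pos.le hbd2
      have hfin : ‖φ‖ ^ 2 < ‖φ‖ ^ 2 := by
        calc ‖φ‖ ^ 2 ≤ κ2 * ((4:ℝ) ^ d * ‖w‖ ^ 2) := hb
          _ < κ2 * ((4:ℝ) ^ d * (δ ^ 2 * ‖φ‖ ^ 2)) := by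
              have h4dpos : (0:ℝ) < (4:ℝ) ^ d := by positivity
              exact mul_lt_mul_of_pos_left (mul_lt_mul_of_pos_left hw2 h4dpos) hκ2pos
          _ ≤ ‖φ‖ ^ 2 := by
              have h6 : κ2 * δ ^ 2 * (4:ℝ) ^ d ≤ θ := by
                calc κ2 * δ ^ 2 * (4:ℝ) ^ d ≤ κ2 * δ ^ 2 * M ^ 2 :=
                      mul_le_mul_of_nonneg_left h4M hκδ
                  _ = θ := hkdM
              have h7 : (κ2 * δ ^ 2 * (4:ℝ) ^ d) * ‖φ‖ ^ 2 ≤ θ * ‖φ‖ ^ 2 :=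
                mul_le_mul_of_nonneg_right h6 (sq_nonneg ‖φ‖)
              have h8 : θ * ‖φ‖ ^ 2 ≤ 1 * ‖φ‖ ^ 2 :=
                mul_le_mul_of_nonneg_right hθle1 (sq_nonneg ‖φ‖)
              calc κ2 * ((4:ℝ) ^ d * (δ ^ 2 * ‖φ‖ ^ 2))
                  = (κ2 * δ ^ 2 * (4:ℝ) ^ d) * ‖φ‖ ^ 2 := by ring
                _ ≤ θ * ‖φ‖ ^ 2 := h7
                _ ≤ ‖φ‖ ^ 2 := by linarith
      exact lt_irrefl _ hfin
  exact not_mem_spectrum_of_bddBelow H hH μ hδ hbdd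

end

-- sanity check of axioms used
-- #print axioms spectral_gap_of_locally_bulk_gapped
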